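/- Given a unit object (I, α) in a semi-monoidal category, the endofunctors X ↦ I ⊗ X and X ↦ X ⊗ I are equivalences of categories (not merely fully faithful). -/

import Mathlib

open CategoryTheory

universe v u

/-- A semi-monoidal category: a category with an associative tensor product (strictly
associative on objects, with the corresponding compatibility on morphisms), no unit assumed. -/
structure SemiMonoidalCategory (C : Type u) [Category.{v} C] where
  ten : C → C → C
  tHom : ∀ {X Y Z W : C}, (X ⟶ Y) → (Z ⟶ W) → (ten X Z ⟶ ten Y W)
  tHom_id : ∀ (X Z : C), tHom (𝟙 X) (𝟙 Z) = 𝟙 (ten X Z)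
  tHom_comp : ∀ {X₁ X₂ X₃ Y₁ Y₂ Y₃ : C} (f : X₁ ⟶ X₂) (f' : X₂ ⟶ X₃)
    (g : Y₁ ⟶ Y₂) (g' : Y₂ ⟶ Y₃),
    tHom (f ≫ f') (g ≫ g') = tHom f g ≫ tHom f' g'
  assoc : ∀ (X Y Z : C), ten (ten X Y) Z = ten X (ten Y Z)
  assoc_nat : ∀ {X X' Y Y' Z Z' : C} (f : X ⟶ X') (g : Y ⟶ Y') (h : Z ⟶ Z'),
    tHom (tHom f g) h =
      eqToHom (assoc X Y Z) ≫ tHom f (tHom g h) ≫ eqToHom (assoc X' Y' Z').symm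

namespace SemiMonoidalCategory

variable {C : Type u} [Category.{v} C] (M : SemiMonoidalCategory C)

/-- An object is cancellable if tensoring with it on either side is a fully faithful
endofunctor, i.e. bijective on hom-sets. -/
def CancellableObj (I : C) : Prop :=
  (∀ X Y : C, Function.Bijective fun f : X ⟶ Y => M.tHom (𝟙 I) f) ∧
  (∀ X Y : C, Function.Bijective fun f : X ⟶ Y => M.tHom f (𝟙 I))

/-- A unit object is a cancellable pseudo-idempotent: `α : I ⊗ I ≅ I` an isomorphism with `I`
cancellable. -/
def IsUnitObj (I : C) (α : M.ten I I ⟶ I) : Prop :=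
  M.CancellableObj I ∧ IsIso α

/-- Tensoring with `I` on the left, as an endofunctor. -/
def lTensor (I : C) : C ⥤ C where
  obj X := M.ten I X
  map f := M.tHom (𝟙 I) f
  map_id X := M.tHom_id I X
  map_comp {X Y Z} f g := by
    have := M.tHom_comp (𝟙 I) (𝟙 I) f g
    simpa using this

/-- Tensoring with `I` on the right, as an endofunctor. -/
def rTensor (I : C) : C ⥤ C where
  obj X := M.ten X I
  map f := M.tHom f (𝟙 I)
  map_id X := M.tHom_id X I
  map_comp {X Y Z} f g := by
    have := M.tHom_comp f g (𝟙 I) (𝟙 I)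
    simpa using this

end SemiMonoidalCategory

open CategoryTheory SemiMonoidalCategory

/-- Given a unit object `(I, α)` in a semi-monoidal category, the endofunctors `X ↦ I ⊗ X`
and `X ↦ X ⊗ I` are equivalences of categories (not merely fully faithful). -/
theorem unit_tensor_equivalence
    {C : Type*} [Category C] (M : SemiMonoidalCategory C)
    {I : C} {α : M.ten I I ⟶ I} (h : M.IsUnitObj I α) :
    (M.lTensor I).IsEquivalence ∧ (M.rTensor I).IsEquivalence := by
  obtain ⟨⟨hl, hr⟩, hα⟩ := h
  have hαiso : ∀ X : C, IsIso (M.tHom α (𝟙 X)) := fun X =>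
    ⟨M.tHom (inv α) (𝟙 X), by rw [← M.tHom_comp]; simp [M.tHom_id],
      by rw [← M.tHom_comp]; simp [M.tHom_id]⟩
  have hαiso' : ∀ X : C, IsIso (M.tHom (𝟙 X) α) := fun X =>
    ⟨M.tHom (𝟙 X) (inv α), by rw [← M.tHom_comp]; simp [M.tHom_id],
      by rw [← M.tHom_comp]; simp [M.tHom_id]⟩
  constructor
  · have hfaith : (M.lTensor I).Faithful := ⟨fun {X Y f g} hfg => (hl X Y).1 hfg⟩
    have hfull : (M.lTensor I).Full :=
      ⟨fun {X Y} g => ⟨((hl X Y).2 g).choose, ((hl X Y).2 g).choose_spec⟩⟩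
    have hess : (M.lTensor I).EssSurj := by
      constructor
      intro X
      obtain ⟨f, hf⟩ := (hl (M.ten I X) X).2
        (eqToHom (M.assoc I I X).symm ≫ M.tHom α (𝟙 X))
      have : IsIso ((M.lTensor I).map f) := by
        have := hαiso X
        rw [show (M.lTensor I).map f = _ from hf]
        exact @IsIso.comp_isIso _ _ _ _ _ _ _ (Iso.isIso_hom (eqToIso (M.assoc I I X).symm)) this
      have : IsIso f := @isIso_of_fully_faithful _ _ _ _ (M.lTensor I) hfull hfaith _ _ f this
      exact ⟨X, ⟨@asIso _ _ _ _ f this⟩⟩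
    exact ⟨hfaith, hfull, hess⟩
  · have hfaith : (M.rTensor I).Faithful := ⟨fun {X Y f g} hfg => (hr X Y).1 hfg⟩
    have hfull : (M.rTensor I).Full :=
      ⟨fun {X Y} g => ⟨((hr X Y).2 g).choose, ((hr X Y).2 g).choose_spec⟩⟩
    have hess : (M.rTensor I).EssSurj := by
      constructor
      intro X
      obtain ⟨f, hf⟩ := (hr (M.ten X I) X).2
        (eqToHom (M.assoc X I I) ≫ M.tHom (𝟙 X) α)
      have : IsIso ((M.rTensor I).map f) := by
        have := hαiso' X
        rw [show (M.rTensor I).map f = _ from hf]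
        exact @IsIso.comp_isIso _ _ _ _ _ _ _ (Iso.isIso_hom (eqToIso (M.assoc X I I))) this
      have : IsIso f := @isIso_of_fully_faithful _ _ _ _ (M.rTensor I) hfull hfaith _ _ f this
      exact ⟨X, ⟨@asIso _ _ _ _ f this⟩⟩
    exact ⟨hfaith, hfull, hess⟩
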